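/- Let L be a pure one-dimensional sheaf on a surface J which is an extension 0 → O_S → L → O_Z → 0 of the structure sheaf of a finite set Z of smooth points of a curve S by O_S, given by an extension class in Ext^1(O_Z, O_S) = ⊕_{z∈Z} T_zS that is nonzero in each factor. Then L is locally free of rank one on its support S. -/

import Mathlib

/-- let `L` be a pure one-dimensional sheaf on a smooth surface
`J` given as an extension `0 → O_S → L → O_Z → 0` of the structure sheaf of a
finite set `Z` of smooth points of a reduced curve `S` by `O_S`, with extension
class `(ξ_z)_{z∈Z} ∈ Ext¹(O_Z,O_S) = ⊕_{z∈Z} T_zS` nonzero in each factor.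
Then `L` is locally free of rank one on its support `S`.

Away from `Z` the extension is an isomorphism `O_S ≅ L`, so the content is
local at each `z ∈ Z`: the stalk `O_{S,z}` is a discrete valuation ring `R z`
(a smooth point of a curve), the stalk of the extension is an exact sequence
`0 → R z → L_z → k(z) → 0` of `R z`-modules, and nonvanishing of the extension
class at `z` means this sequence does not split.  The conclusion is that each
stalk `L_z` is a free `R z`-module of rank one. -/
theorem stalk_free_of_nonsplit_extension
    {Z : Type*}
    (R : Z → Type*) [∀ z, CommRing (R z)] [∀ z, IsDomain (R z)]
    [∀ z, IsDiscreteValuationRing (R z)]                -- O_{S,z}, z smooth on S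
    (L : Z → Type*) [∀ z, AddCommGroup (L z)] [∀ z, Module (R z) (L z)]
    (f : ∀ z, R z →ₗ[R z] L z)                          -- O_S → L at z
    (g : ∀ z, L z →ₗ[R z] IsLocalRing.ResidueField (R z)) -- L → O_Z at z
    (hf : ∀ z, Function.Injective (f z))
    (hg : ∀ z, Function.Surjective (g z))
    (hexact : ∀ z, Function.Exact (f z) (g z))
    -- the extension class is nonzero in each factor T_zS:
    (hnonsplit : ∀ z, ¬ ∃ s : IsLocalRing.ResidueField (R z) →ₗ[R z] L z,
      (g z) ∘ₗ s = LinearMap.id) :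
    ∀ z, Nonempty (L z ≃ₗ[R z] R z) := by
  intro z
  obtain ⟨π, hπ⟩ := IsDiscreteValuationRing.exists_irreducible (R z)
  have hspan : IsLocalRing.maximalIdeal (R z) = Ideal.span {π} :=
    (IsDiscreteValuationRing.irreducible_iff_uniformizer π).mp hπ
  obtain ⟨x, hx⟩ := hg z 1
  have hπm : π ∈ IsLocalRing.maximalIdeal (R z) := by
    rw [hspan]; exact Ideal.mem_span_singleton_self π
  have hgx : g z (π • x) = 0 := by
    rw [map_smul, hx, Algebra.smul_def, mul_one]
    exact Ideal.Quotient.eq_zero_iff_mem.mpr hπm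
  obtain ⟨a, ha⟩ : ∃ a, f z a = π • x := ((hexact z) (π • x)).mp hgx
  by_cases ham : a ∈ IsLocalRing.maximalIdeal (R z)
  · -- nontrivial torsion gives a splitting: contradiction
    exfalso
    rw [hspan, Ideal.mem_span_singleton'] at ham
    obtain ⟨b, hb⟩ := ham
    set t : L z := x - f z b with ht
    have hπt : π • t = 0 := by
      rw [ht, smul_sub, ← ha, ← map_smul, smul_eq_mul]
      rw [show π * b = b * π from mul_comm _ _, hb]
      simp
    have hker : IsLocalRing.maximalIdeal (R z) ≤
        LinearMap.ker (LinearMap.toSpanSingleton (R z) (L z) t) := by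
      intro r hr
      rw [hspan, Ideal.mem_span_singleton'] at hr
      obtain ⟨c, hc⟩ := hr
      simp only [LinearMap.mem_ker, LinearMap.toSpanSingleton_apply]
      rw [← hc, mul_smul, hπt, smul_zero]
    refine hnonsplit z ⟨Submodule.liftQ _ (LinearMap.toSpanSingleton (R z) (L z) t) hker, ?_⟩
    ext y
    obtain ⟨r, rfl⟩ := Ideal.Quotient.mk_surjective y
    have hgt : g z t = 1 := by
      rw [ht, map_sub, hx, (hexact z).apply_apply_eq_zero b, sub_zero]
    show g z (r • t) = Ideal.Quotient.mk _ r
    rw [map_smul, hgt, Algebra.smul_def, mul_one]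
    rfl
  · -- `a` is a unit, and `x` generates `L z` freely
    have hu : IsUnit a := by
      by_contra h
      exact ham h
    obtain ⟨u, rfl⟩ := hu
    have hbij : Function.Bijective (LinearMap.toSpanSingleton (R z) (L z) x) := by
      constructor
      · rw [injective_iff_map_eq_zero]
        intro r hr
        rw [LinearMap.toSpanSingleton_apply] at hr
        have hr0 : Ideal.Quotient.mk (IsLocalRing.maximalIdeal (R z)) r = 0 := by
          have h2 := congrArg (g z) hr
          rw [map_smul, hx, map_zero, Algebra.smul_def, mul_one] at h2
          exact h2
        have hrm : r ∈ IsLocalRing.maximalIdeal (R z) :=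
          Ideal.Quotient.eq_zero_iff_mem.mp hr0
        rw [hspan, Ideal.mem_span_singleton'] at hrm
        obtain ⟨c, rfl⟩ := hrm
        have hfz : f z (c * ↑u) = 0 := by
          calc f z (c * ↑u) = c • f z ↑u := by rw [← smul_eq_mul, map_smul]
            _ = c • (π • x) := by rw [ha]
            _ = (c * π) • x := by rw [mul_smul]
            _ = 0 := hr
        have hc0 : c * ↑u = 0 := hf z (by rw [hfz, map_zero])
        rcases mul_eq_zero.mp hc0 with h | h
        · rw [h, zero_mul]
        · exact absurd h u.ne_zero
      · intro l
        obtain ⟨c, hc⟩ := Ideal.Quotient.mk_surjective (g z l)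
        have h1 : g z (l - c • x) = 0 := by
          rw [map_sub, map_smul, hx, Algebra.smul_def, mul_one, show
            (algebraMap (R z) (IsLocalRing.ResidueField (R z))) c =
              Ideal.Quotient.mk _ c from rfl, hc, sub_self]
        obtain ⟨d, hd⟩ := ((hexact z) (l - c • x)).mp h1
        refine ⟨c + d * ↑u⁻¹ * π, ?_⟩
        rw [LinearMap.toSpanSingleton_apply, add_smul]
        have hfd : f z d = (d * ↑u⁻¹ * π) • x := by
          calc f z d = f z (d * ↑u⁻¹ * ↑u) := by
                rw [mul_assoc, Units.inv_mul, mul_one]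
            _ = (d * ↑u⁻¹) • f z ↑u := by rw [← smul_eq_mul, map_smul]
            _ = (d * ↑u⁻¹) • (π • x) := by rw [ha]
            _ = (d * ↑u⁻¹ * π) • x := by simp [mul_smul]
        rw [← hfd, hd]
        abel
    exact ⟨(LinearEquiv.ofBijective _ hbij).symm⟩
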